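/- (Interval placement, achievability / Theorem 2 core) Let I be a finite family of intervals, where each interval i has a start point s(i) and a finish point f(i) with s(i) ≤ f(i), in a linearly ordered set. There exists an assignment of the intervals to columns, such that two intervals placed in the same column never overlap, which uses exactly D columns, where D is the maximum, over all points x, of the number of intervals i with s(i) ≤ x ≤ f(i). Hence the minimum number of columns needed to place the bundled path transitive edges of a decomposition path equals the depth D of its family of intervals. -/

import Mathlib

/-- blocked set -/
def greedyCol (ov : ℕ → ℕ → Bool) (p : ℕ) : ℕ :=
  Nat.find (Finset.exists_notMem
    (((Finset.range p).filter (fun q => ov q p)).attach.image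
      (fun q => greedyCol ov q.1)))
termination_by p
decreasing_by
  all_goals
  have h := q.2
  simp only [Finset.mem_filter, Finset.mem_range] at h
  exact h.1

lemma greedyCol_eq (ov : ℕ → ℕ → Bool) (p : ℕ) :
    greedyCol ov p = Nat.find (Finset.exists_notMem
    (((Finset.range p).filter (fun q => ov q p)).attach.image
      (fun q => greedyCol ov q.1))) := by
  rw [greedyCol]

lemma greedyCol_not_mem (ov : ℕ → ℕ → Bool) (p : ℕ) :
    greedyCol ov p ∉ (((Finset.range p).filter (fun q => ov q p)).attach.image
      (fun q => greedyCol ov q.1)) := by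
  have h := Nat.find_spec (Finset.exists_notMem
    (((Finset.range p).filter (fun q => ov q p)).attach.image
      (fun q => greedyCol ov q.1)))
  rw [greedyCol_eq]
  exact h

lemma greedyCol_ne (ov : ℕ → ℕ → Bool) {q p : ℕ} (h : q < p) (hov : ov q p = true) :
    greedyCol ov q ≠ greedyCol ov p := by
  intro he
  apply greedyCol_not_mem ov p
  rw [← he]
  exact Finset.mem_image.2 ⟨⟨q, by simp [h, hov]⟩, Finset.mem_attach _ _, rfl⟩

lemma greedyCol_le (ov : ℕ → ℕ → Bool) (p : ℕ) :
    greedyCol ov p ≤ ((Finset.range p).filter (fun q => ov q p)).card := by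
  set B := (((Finset.range p).filter (fun q => ov q p)).attach.image
      (fun q => greedyCol ov q.1)) with hB
  have hmin : ∀ m < greedyCol ov p, m ∈ B := by
    intro m hm
    have := Nat.find_min (Finset.exists_notMem B) (by rw [greedyCol_eq] at hm; exact hm)
    simpa using this
  have hsub : Finset.range (greedyCol ov p) ⊆ B := fun m hm =>
    hmin m (Finset.mem_range.1 hm)
  calc greedyCol ov p = (Finset.range (greedyCol ov p)).card := (Finset.card_range _).symm
    _ ≤ B.card := Finset.card_le_card hsub
    _ ≤ _ := (Finset.card_image_le).trans (by rw [Finset.card_attach])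



/-- (Interval placement, achievability; core of Theorem 2) For a finite family
of closed intervals there is a column assignment, in which intervals sharing a
column never overlap, using exactly `D` columns, where `D` is the depth of the
family (the maximum over points `x` of the number of intervals containing
`x`). -/
theorem exists_column_assignment_card_eq_depth
    {α : Type*} [LinearOrder α] {I : Type*} [Fintype I]
    (s f : I → α) (hsf : ∀ i, s i ≤ f i)
    (D : ℕ)
    (hD : IsGreatest {n : ℕ | ∃ x : α, n = Nat.card {i : I // s i ≤ x ∧ x ≤ f i}} D) :
    ∃ c : I → ℕ,
      (∀ i j : I, i ≠ j → c i = c j →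
        Disjoint (Set.Icc (s i) (f i)) (Set.Icc (s j) (f j))) ∧
      (Finset.univ.image c).card = D := by
  classical
  -- depth at a point x equals the card of the filter
  have hdepth : ∀ x : α, Nat.card {i : I // s i ≤ x ∧ x ≤ f i}
      = (Finset.univ.filter (fun i : I => s i ≤ x ∧ x ≤ f i)).card := by
    intro x
    rw [Nat.card_eq_fintype_card, Fintype.card_subtype]
  set n := Fintype.card I with hn
  let e : I ≃ Fin n := Fintype.equivFin I
  let key : I → α ×ₗ ℕ := fun i => toLex (s i, (e i : ℕ))
  have hkey : Function.Injective key := by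
    intro i j h
    have h2 := congrArg (fun p => (ofLex p).2) h
    simpa using e.injective (Fin.val_injective h2)
  letI : LinearOrder I := LinearOrder.lift' key hkey
  let σ : Fin n ≃o I := monoEquivOfFin I rfl
  -- s is monotone along σ
  have hmono : ∀ {q p : Fin n}, q ≤ p → s (σ q) ≤ s (σ p) := by
    intro q p h
    have h2 : key (σ q) ≤ key (σ p) := σ.monotone h
    rcases (Prod.Lex.le_iff).1 h2 with h3 | h3
    · exact le_of_lt h3
    · exact le_of_eq h3.1
  let ov : ℕ → ℕ → Bool := fun a b =>
    if ha : a < n then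
      if hb : b < n then
        decide (s (σ ⟨b, hb⟩) ≤ f (σ ⟨a, ha⟩) ∧ s (σ ⟨a, ha⟩) ≤ f (σ ⟨b, hb⟩))
      else false
    else false
  let c : I → ℕ := fun i => greedyCol ov (σ.symm i : Fin n).val
  have hc : ∀ i : I, c i = greedyCol ov (σ.symm i : Fin n).val := fun _ => rfl
  -- the disjointness property
  have hdisj : ∀ i j : I, i ≠ j → c i = c j →
      Disjoint (Set.Icc (s i) (f i)) (Set.Icc (s j) (f j)) := by
    have main : ∀ q p : Fin n, (q : ℕ) < (p : ℕ) → c (σ q) = c (σ p) →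
        Disjoint (Set.Icc (s (σ q)) (f (σ q))) (Set.Icc (s (σ p)) (f (σ p))) := by
      intro q p hqp hcc
      by_contra hnd
      rw [Set.not_disjoint_iff] at hnd
      obtain ⟨x, ⟨hx1, hx2⟩, ⟨hx3, hx4⟩⟩ := hnd
      have hov : ov (q : ℕ) (p : ℕ) = true := by
        simp only [ov, dif_pos q.isLt, dif_pos p.isLt, Fin.eta, decide_eq_true_eq]
        exact ⟨le_trans hx3 hx2, le_trans hx1 hx4⟩
      have := greedyCol_ne ov hqp hov
      rw [hc, hc] at hcc
      simp only [OrderIso.symm_apply_apply] at hcc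
      exact this hcc
    intro i j hij hcc
    rcases lt_trichotomy ((σ.symm i : Fin n) : ℕ) ((σ.symm j : Fin n) : ℕ) with h | h | h
    · have := main _ _ h (by rw [σ.apply_symm_apply, σ.apply_symm_apply]; exact hcc)
      simpa only [OrderIso.apply_symm_apply] using this
    · exact absurd (σ.symm.injective (Fin.val_injective h)) hij
    · have := (main _ _ h (by rw [σ.apply_symm_apply, σ.apply_symm_apply]; exact hcc.symm)).symm
      simpa only [OrderIso.apply_symm_apply] using this
  refine ⟨c, hdisj, ?_⟩
  -- upper bound: every color is < D
  have hlt : ∀ i : I, c i < D := by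
    intro i
    set p : Fin n := σ.symm i with hp
    have hpi : σ p = i := σ.apply_symm_apply i
    set x := s i with hx
    set T := Finset.univ.filter (fun j : I => s j ≤ x ∧ x ≤ f j) with hT
    have hiT : i ∈ T := by
      simp [hT, hx, hsf i]
    have hTD : T.card ≤ D := by
      apply hD.2
      exact ⟨x, by rw [hdepth]⟩
    -- the blocked set injects into T.erase i
    let F : ℕ → I := fun q => if h : q < n then σ ⟨q, h⟩ else i
    have hcard : ((Finset.range (p : ℕ)).filter (fun q => ov q (p : ℕ))).card
        ≤ (T.erase i).card := by
      apply Finset.card_le_card_of_injOn F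
      · intro q hq
        rw [Finset.mem_coe, Finset.mem_filter, Finset.mem_range] at hq
        obtain ⟨hq1, hq2⟩ := hq
        have hqn : q < n := hq1.trans p.isLt
        have hF : F q = σ ⟨q, hqn⟩ := dif_pos hqn
        simp only [ov, dif_pos hqn, dif_pos p.isLt, Fin.eta, decide_eq_true_eq] at hq2
        rw [Finset.mem_coe, Finset.mem_erase, hF]
        constructor
        · intro h
          have : (⟨q, hqn⟩ : Fin n) = p := σ.injective (h.trans hpi.symm)
          rw [← this] at hq1
          exact lt_irrefl q hq1
        · rw [hT, Finset.mem_filter]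
          refine ⟨Finset.mem_univ _, ?_, ?_⟩
          · rw [hx, ← hpi]
            exact hmono (Fin.le_def.2 hq1.le)
          · rw [hx, ← hpi]
            exact hq2.1
      · intro a ha b hb hab
        rw [Finset.mem_coe, Finset.mem_filter, Finset.mem_range] at ha hb
        have han : a < n := ha.1.trans p.isLt
        have hbn : b < n := hb.1.trans p.isLt
        simp only [F, dif_pos han, dif_pos hbn] at hab
        exact congrArg Fin.val (σ.injective hab)
    have := greedyCol_le ov (p : ℕ)
    have h1 : (T.erase i).card < T.card := Finset.card_erase_lt_of_mem hiT
    calc c i ≤ (T.erase i).card := le_trans this hcard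
      _ < T.card := h1
      _ ≤ D := hTD
  -- card of image ≤ D
  have hsub : Finset.univ.image c ⊆ Finset.range D := by
    intro m hm
    obtain ⟨i, _, rfl⟩ := Finset.mem_image.1 hm
    exact Finset.mem_range.2 (hlt i)
  have hub : (Finset.univ.image c).card ≤ D := by
    calc (Finset.univ.image c).card ≤ (Finset.range D).card := Finset.card_le_card hsub
      _ = D := Finset.card_range D
  -- lower bound
  obtain ⟨x, hxD⟩ := hD.1
  set S := Finset.univ.filter (fun i : I => s i ≤ x ∧ x ≤ f i) with hS
  have hSD : S.card = D := by rw [hxD, hdepth]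
  have hinj : Set.InjOn c S := by
    intro i hi j hj hij
    by_contra hne
    have hd := hdisj i j hne hij
    simp only [hS, Finset.coe_filter, Set.mem_setOf_eq, Finset.mem_univ, true_and] at hi hj
    exact Set.disjoint_left.1 hd (Set.mem_Icc.2 hi) (Set.mem_Icc.2 hj)
  have hlb : D ≤ (Finset.univ.image c).card := by
    calc D = S.card := hSD.symm
      _ = (S.image c).card := (Finset.card_image_of_injOn hinj).symm
      _ ≤ (Finset.univ.image c).card := Finset.card_le_card (Finset.image_subset_image (Finset.subset_univ S))
  omega
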